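/- Let $w$ be a weight with $W(t)=\int_0^t w>0$ for $t>0$, and $1<q<\infty$. If there exists a constant $C$ such that for every positive decreasing function $f^*$ on $(0,\infty)$, $\sup_{t>0} f^{**}(t)\,W^{1/q}(t) \le C\Big(\int_0^\infty (f^*(t))\,(f^{**}(t))^{q-1}\,w(t)\,dt\Big)^{1/q}$ where $f^{**}(t)=\frac1t\int_0^t f^*$, then $w\in R_q$, i.e., $\sup_{r<s} \frac{W^{1/q}(s)}{s} \le C' \frac{W^{1/q}(r)}{r}$ for all $r>0$. -/

import Mathlib

open MeasureTheory Set

/-- If the embedding `Γ^q_1(w) ⊂ Γ^{q,∞}(w)` holds on decreasing functions, i.e.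
`f**(t) W^{1/q}(t) ≤ C (∫_0^∞ f* (f**)^{q-1} w)^{1/q}` for all `t > 0` and all nonnegative
decreasing `f*`, then `w ∈ R_q`: `W^{1/q}(s)/s ≤ C' W^{1/q}(r)/r` for `0 < r < s`. -/
theorem stmt_7 (w W : ℝ → ℝ) (q : ℝ) (hq : 1 < q)
    (hw_nonneg : ∀ x, 0 ≤ w x)
    (hw_loc : ∀ t > 0, IntegrableOn w (Set.Ioc 0 t))
    (hW : ∀ t, W t = ∫ s in Set.Ioc 0 t, w s)
    (hWpos : ∀ t > 0, 0 < W t)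
    (hyp : ∃ C > 0, ∀ f : ℝ → ℝ, (∀ x, 0 ≤ f x) → AntitoneOn f (Set.Ioi 0) →
      ∀ t > 0, ((1 / t) * ∫ s in Set.Ioc 0 t, f s) * (W t) ^ (1 / q) ≤
        C * (∫ x in Set.Ioi 0,
          f x * ((1 / x) * ∫ s in Set.Ioc 0 x, f s) ^ (q - 1) * w x) ^ (1 / q)) :
    ∃ C > 0, ∀ r s : ℝ, 0 < r → r < s →
      (W s) ^ (1 / q) / s ≤ C * ((W r) ^ (1 / q) / r) := by
  obtain ⟨C, hC, h⟩ := hyp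
  refine ⟨C, hC, fun r s hr hrs => ?_⟩
  have hs : 0 < s := hr.trans hrs
  set f : ℝ → ℝ := (Set.Ioc 0 r).indicator (fun _ => 1) with hf
  have hfnn : ∀ x, 0 ≤ f x := fun x => Set.indicator_nonneg (fun _ _ => zero_le_one) x
  have hfanti : AntitoneOn f (Set.Ioi 0) := by
    intro x hx y hy hxy
    by_cases hyr : y ≤ r
    · have h1 : f y = 1 := Set.indicator_of_mem (show y ∈ Set.Ioc 0 r from ⟨hy, hyr⟩) _
      have h2 : f x = 1 := Set.indicator_of_mem (show x ∈ Set.Ioc 0 r from ⟨hx, hxy.trans hyr⟩) _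
      rw [h1, h2]
    · have h1 : f y = 0 := Set.indicator_of_notMem (fun hm => hyr hm.2) _
      rw [h1]; exact hfnn x
  have hint : ∀ t, 0 < t → (∫ u in Set.Ioc 0 t, f u) = min t r := by
    intro t ht
    rw [hf, MeasureTheory.setIntegral_indicator measurableSet_Ioc,
      Set.Ioc_inter_Ioc, max_self]
    simp [Real.volume_Ioc, ENNReal.toReal_ofReal (le_min ht.le hr.le), ht.le, hr.le]
  have hIeq : (∫ x in Set.Ioi 0,
      f x * ((1 / x) * ∫ u in Set.Ioc 0 x, f u) ^ (q - 1) * w x) = W r := by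
    have hcong : ∀ x ∈ Set.Ioi (0:ℝ),
        f x * ((1 / x) * ∫ u in Set.Ioc 0 x, f u) ^ (q - 1) * w x
          = (Set.Ioc 0 r).indicator w x := by
      intro x hx
      have hx0 : (0:ℝ) < x := hx
      by_cases hxr : x ≤ r
      · have hmem : x ∈ Set.Ioc 0 r := ⟨hx0, hxr⟩
        have h1 : f x = 1 := Set.indicator_of_mem hmem _
        have h2 : (∫ u in Set.Ioc 0 x, f u) = x := by
          rw [hint x hx0, min_eq_left hxr]
        rw [h1, h2, Set.indicator_of_mem hmem, one_div, inv_mul_cancel₀ hx0.ne',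
          Real.one_rpow, one_mul, one_mul]
      · have hmem : x ∉ Set.Ioc 0 r := fun hm => hxr hm.2
        have h1 : f x = 0 := Set.indicator_of_notMem hmem _
        rw [h1, Set.indicator_of_notMem hmem, zero_mul, zero_mul]
    rw [MeasureTheory.setIntegral_congr_fun measurableSet_Ioi hcong,
      MeasureTheory.setIntegral_indicator measurableSet_Ioc,
      Set.inter_eq_self_of_subset_right Set.Ioc_subset_Ioi_self, hW r]
  have key := h f hfnn hfanti s hs
  rw [hIeq, hint s hs, min_eq_right hrs.le] at key
  have hWs : 0 ≤ (W s) ^ (1 / q) := Real.rpow_nonneg (hWpos s hs).le _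
  have hWr : 0 ≤ (W r) ^ (1 / q) := Real.rpow_nonneg (hWpos r hr).le _
  rw [← mul_div_assoc, div_le_div_iff₀ hs hr]
  have h2 := mul_le_mul_of_nonneg_right key hs.le
  calc (W s) ^ (1/q) * r = 1/s * r * (W s) ^ (1/q) * s := by field_simp
    _ ≤ C * (W r) ^ (1/q) * s := h2
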